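/- Let C be a sum closed, rc-invariant permutation class. Set a_n = |C_n|, b_n = |C^rc_{2n}|, and d_k = |ind(C)^rc_{2k}| (the number of centrosymmetric sum-indecomposable permutations of size 2k in C). Then for all n ≥ 0: b_n = a_n + Σ_{k=1}^{n} a_{n−k} · d_k. -/
import Mathlib


open Filter Topology

/-- `π` contains `σ` as a pattern. -/
def PermContains {n m : ℕ} (π : Equiv.Perm (Fin n)) (σ : Equiv.Perm (Fin m)) : Prop :=
  ∃ f : Fin m → Fin n, StrictMono f ∧ ∀ i j : Fin m, σ i < σ j ↔ π (f i) < π (f j)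

/-- A permutation class: downward closed under pattern containment. -/
def IsPermClass (C : ∀ n : ℕ, Set (Equiv.Perm (Fin n))) : Prop :=
  ∀ (m n : ℕ) (σ : Equiv.Perm (Fin m)) (π : Equiv.Perm (Fin n)),
    π ∈ C n → PermContains π σ → σ ∈ C m

/-- The reverse–complement of a permutation. -/
def rcPerm {n : ℕ} (π : Equiv.Perm (Fin n)) : Equiv.Perm (Fin n) :=
  (Fin.revPerm.trans π).trans Fin.revPerm

/-- A class is rc-invariant if `rc(C) = C`. -/
def RCInvariant (C : ∀ n : ℕ, Set (Equiv.Perm (Fin n))) : Prop :=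
  ∀ n : ℕ, rcPerm '' (C n) = C n

/-- `|C_n|`. -/
noncomputable def classCount (C : ∀ n : ℕ, Set (Equiv.Perm (Fin n))) (n : ℕ) : ℕ :=
  (C n).ncard

/-- `|C^rc_{2n}|`, the number of centrosymmetric permutations of size `2n` in `C`. -/
noncomputable def rcCount (C : ∀ n : ℕ, Set (Equiv.Perm (Fin n))) (n : ℕ) : ℕ :=
  {π ∈ C (2 * n) | rcPerm π = π}.ncard

/-- The sequence `n ↦ (f n)^(1/n)`, valued in `ℝ≥0∞`. -/
noncomputable def growthSeq (f : ℕ → ℕ) (n : ℕ) : ENNReal :=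
  (f n : ENNReal) ^ ((n : ℝ)⁻¹)

/-- The direct sum `σ ⊕ τ` of two permutations. -/
def sumPerm {a b : ℕ} (σ : Equiv.Perm (Fin a)) (τ : Equiv.Perm (Fin b)) :
    Equiv.Perm (Fin (a + b)) :=
  (finSumFinEquiv.symm.trans (Equiv.sumCongr σ τ)).trans finSumFinEquiv

/-- A class is sum closed if it is closed under `⊕`. -/
def SumClosed (C : ∀ n : ℕ, Set (Equiv.Perm (Fin n))) : Prop :=
  ∀ (a b : ℕ) (σ : Equiv.Perm (Fin a)) (τ : Equiv.Perm (Fin b)),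
    σ ∈ C a → τ ∈ C b → sumPerm σ τ ∈ C (a + b)

/-- Transport a permutation along an equality of sizes. -/
def permCast {m n : ℕ} (h : m = n) (π : Equiv.Perm (Fin m)) : Equiv.Perm (Fin n) :=
  ((finCongr h).symm.trans π).trans (finCongr h)

/-- A permutation is sum-indecomposable if it is not the sum of two permutations of
nonzero size. -/
def SumIndecomposable {n : ℕ} (π : Equiv.Perm (Fin n)) : Prop :=
  ¬ ∃ (a b : ℕ) (σ : Equiv.Perm (Fin a)) (τ : Equiv.Perm (Fin b)) (h : a + b = n),
      0 < a ∧ 0 < b ∧ π = permCast h (sumPerm σ τ)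

/-- `|ind(C)_n|`, the number of sum-indecomposable permutations of size `n` in `C`. -/
noncomputable def indCount (C : ∀ n : ℕ, Set (Equiv.Perm (Fin n))) (n : ℕ) : ℕ :=
  {π ∈ C n | SumIndecomposable π}.ncard

/-- `|ind(C)^rc_{2k}|`, the number of centrosymmetric sum-indecomposable permutations of
size `2k` in `C`. -/
noncomputable def indRcCount (C : ∀ n : ℕ, Set (Equiv.Perm (Fin n))) (k : ℕ) : ℕ :=
  {π ∈ C (2 * k) | SumIndecomposable π ∧ rcPerm π = π}.ncard

section PCAux

open Equiv

variable {N : ℕ}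

@[simp] lemma fin_val_mk {m e : ℕ} (h : e < m) : ((⟨e, h⟩ : Fin m) : ℕ) = e := rfl

lemma perm_val_congr {m : ℕ} (ρ : Equiv.Perm (Fin m)) {x y : Fin m} (h : (x : ℕ) = (y : ℕ)) :
    (ρ x : ℕ) = (ρ y : ℕ) := by rw [Fin.ext h]

lemma perm_ext_val {m : ℕ} {ρ ρ' : Equiv.Perm (Fin m)}
    (h : ∀ i : Fin m, (ρ i : ℕ) = (ρ' i : ℕ)) : ρ = ρ' :=
  Equiv.ext fun i => Fin.ext (h i)

/-- `π` maps the initial segment of length `c` into itself. -/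
def PCSpl (π : Equiv.Perm (Fin N)) (c : ℕ) : Prop :=
  ∀ i : Fin N, (i : ℕ) < c → ((π i : ℕ) < c)

lemma pcspl_zero (π : Equiv.Perm (Fin N)) : PCSpl π 0 := fun _ hi => absurd hi (Nat.not_lt_zero _)

lemma pcspl_top (π : Equiv.Perm (Fin N)) (c : ℕ) (hc : N ≤ c) : PCSpl π c :=
  fun i _ => lt_of_lt_of_le (π i).isLt hc

lemma PCSpl.symm {π : Equiv.Perm (Fin N)} {c : ℕ} (h : PCSpl π c) : PCSpl π.symm c := by
  classical
  intro i hi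
  set T : Finset (Fin N) := Finset.univ.filter (fun j => (j : ℕ) < c) with hT
  have hmaps : T.image π ⊆ T := by
    intro j hj
    simp only [hT, Finset.mem_image, Finset.mem_filter, Finset.mem_univ, true_and] at *
    obtain ⟨x, hx, rfl⟩ := hj
    exact h x hx
  have hcard : (T.image π).card = T.card := Finset.card_image_of_injective T (Equiv.injective π)
  have heq : T.image π = T := Finset.eq_of_subset_of_card_le hmaps (le_of_eq hcard.symm)
  have hiT : i ∈ T.image π := by
    rw [heq]; simp [hT, hi]
  obtain ⟨j, hj, hji⟩ := Finset.mem_image.mp hiT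
  have hsj : π.symm i = j := by rw [← hji]; simp
  rw [hsj]
  simpa [hT] using hj

lemma PCSpl.ge {π : Equiv.Perm (Fin N)} {c : ℕ} (h : PCSpl π c) {i : Fin N}
    (hi : c ≤ (i : ℕ)) : c ≤ (π i : ℕ) := by
  by_contra hlt
  push_neg at hlt
  have h2 := h.symm (π i) hlt
  simp only [Equiv.symm_apply_apply] at h2
  omega

lemma permCast_rfl {m : ℕ} (π : Equiv.Perm (Fin m)) : permCast rfl π = π := by
  apply Equiv.ext; intro i; simp [permCast]

lemma permCast_val {m n : ℕ} (h : m = n) (π : Equiv.Perm (Fin m)) (i : Fin n) (j : Fin m)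
    (hij : (i : ℕ) = (j : ℕ)) : ((permCast h π) i : ℕ) = (π j : ℕ) := by
  subst h
  rw [permCast_rfl]
  exact perm_val_congr π hij

lemma permCast_mem {C : ∀ n : ℕ, Set (Equiv.Perm (Fin n))} {m n : ℕ} (h : m = n)
    {π : Equiv.Perm (Fin m)} (hπ : π ∈ C m) : permCast h π ∈ C n := by
  subst h; rwa [permCast_rfl]

lemma rcPerm_permCast {m n : ℕ} (h : m = n) (π : Equiv.Perm (Fin m)) :
    rcPerm (permCast h π) = permCast h (rcPerm π) := by
  subst h; rw [permCast_rfl, permCast_rfl]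

lemma sumIndecomposable_permCast_iff {m n : ℕ} (h : m = n) (π : Equiv.Perm (Fin m)) :
    SumIndecomposable (permCast h π) ↔ SumIndecomposable π := by
  subst h; rw [permCast_rfl]

lemma pcspl_permCast {m n : ℕ} (h : m = n) (π : Equiv.Perm (Fin m)) (c : ℕ) :
    PCSpl (permCast h π) c ↔ PCSpl π c := by
  subst h; rw [permCast_rfl]

lemma sumPerm_val_left {a b : ℕ} (σ : Equiv.Perm (Fin a)) (τ : Equiv.Perm (Fin b))
    (i : Fin (a + b)) (j : Fin a) (h : (i : ℕ) = (j : ℕ)) :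
    ((sumPerm σ τ) i : ℕ) = (σ j : ℕ) := by
  have hi : i = Fin.castAdd b j := Fin.ext (by simpa using h)
  rw [hi]; simp [sumPerm]

lemma sumPerm_val_right {a b : ℕ} (σ : Equiv.Perm (Fin a)) (τ : Equiv.Perm (Fin b))
    (i : Fin (a + b)) (j : Fin b) (h : (i : ℕ) = a + (j : ℕ)) :
    ((sumPerm σ τ) i : ℕ) = a + (τ j : ℕ) := by
  have hi : i = Fin.natAdd a j := Fin.ext (by simpa using h)
  rw [hi]; simp [sumPerm]

lemma pcspl_sum {a b : ℕ} (σ : Equiv.Perm (Fin a)) (τ : Equiv.Perm (Fin b)) :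
    PCSpl (sumPerm σ τ) a := by
  intro i hi
  rw [sumPerm_val_left σ τ i ⟨(i : ℕ), hi⟩ rfl]
  exact (σ _).isLt

lemma rcPerm_val {π : Equiv.Perm (Fin N)} (i j : Fin N) (h : (i : ℕ) + (j : ℕ) = N - 1) :
    ((rcPerm π) i : ℕ) = N - 1 - (π j : ℕ) := by
  have hj : i.rev = j := Fin.ext (by
    rw [Fin.val_rev]
    have := i.isLt; have := j.isLt
    omega)
  have h1 : ((rcPerm π) i : ℕ) = N - 1 - (π i.rev : ℕ) := by
    have hlt := (π (Fin.rev i)).isLt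
    simp only [rcPerm, Equiv.trans_apply, Fin.revPerm_apply, Fin.val_rev]
    omega
  rw [h1, hj]

lemma rc_fixed_val {π : Equiv.Perm (Fin N)} (hπ : rcPerm π = π) (i j : Fin N)
    (h : (i : ℕ) + (j : ℕ) = N - 1) : (π i : ℕ) = N - 1 - (π j : ℕ) := by
  conv_lhs => rw [← hπ]
  exact rcPerm_val i j h

lemma pcspl_rc {π : Equiv.Perm (Fin N)} (hπ : rcPerm π = π) {s : ℕ} (h : PCSpl π s) :
    PCSpl π (N - s) := by
  intro i hi
  have hiN := i.isLt
  have hrv : (i.rev : ℕ) = N - 1 - (i : ℕ) := by rw [Fin.val_rev]; omega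
  have h1 : s ≤ (π i.rev : ℕ) := h.ge (by omega)
  have h2 := rc_fixed_val hπ i i.rev (by omega)
  have h3 := (π i.rev).isLt
  omega

/-- Embedding of `Fin (b-a)` into `Fin N` shifted by `a`. -/
def resEmb {N : ℕ} (a : ℕ) {b : ℕ} (hb : b ≤ N) (i : Fin (b - a)) : Fin N :=
  ⟨a + (i : ℕ), by have := i.isLt; omega⟩

@[simp] lemma resEmb_val {N a b : ℕ} (hb : b ≤ N) (i : Fin (b - a)) :
    ((resEmb a hb i : Fin N) : ℕ) = a + (i : ℕ) := rfl

def resFun (π : Equiv.Perm (Fin N)) (a b : ℕ) (hb : b ≤ N)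
    (ha : PCSpl π a) (hbs : PCSpl π b) (i : Fin (b - a)) : Fin (b - a) :=
  ⟨(π (resEmb a hb i) : ℕ) - a, by
    have hi := i.isLt
    have h1 : a ≤ (π (resEmb a hb i) : ℕ) := ha.ge (by simp)
    have h2 : (π (resEmb a hb i) : ℕ) < b := hbs _ (by simp; omega)
    omega⟩

lemma resFun_val (π : Equiv.Perm (Fin N)) (a b : ℕ) (hb : b ≤ N)
    (ha : PCSpl π a) (hbs : PCSpl π b) (i : Fin (b - a)) :
    ((resFun π a b hb ha hbs i : Fin (b - a)) : ℕ) = (π (resEmb a hb i) : ℕ) - a := rfl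

lemma resEmb_resFun (π : Equiv.Perm (Fin N)) (a b : ℕ) (hb : b ≤ N)
    (ha : PCSpl π a) (hbs : PCSpl π b) (i : Fin (b - a)) :
    resEmb a hb (resFun π a b hb ha hbs i) = π (resEmb a hb i) := by
  apply Fin.ext
  rw [resEmb_val, resFun_val]
  exact Nat.add_sub_cancel' (ha.ge (by simp))

/-- Restriction of `π` to the invariant interval `[a, b)`. -/
def resPerm (π : Equiv.Perm (Fin N)) (a b : ℕ) (hb : b ≤ N)
    (ha : PCSpl π a) (hbs : PCSpl π b) : Equiv.Perm (Fin (b - a)) where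
  toFun := resFun π a b hb ha hbs
  invFun := resFun π.symm a b hb ha.symm hbs.symm
  left_inv := by
    intro i
    apply Fin.ext
    rw [resFun_val, resEmb_resFun]
    simp
  right_inv := by
    intro i
    apply Fin.ext
    rw [resFun_val, resEmb_resFun]
    simp

lemma resPerm_val (π : Equiv.Perm (Fin N)) (a b : ℕ) (hb : b ≤ N)
    (ha : PCSpl π a) (hbs : PCSpl π b) (i : Fin (b - a)) :
    a + ((resPerm π a b hb ha hbs i : Fin (b - a)) : ℕ) = (π (resEmb a hb i) : ℕ) := by
  show a + ((resFun π a b hb ha hbs i : Fin (b - a)) : ℕ) = _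
  rw [resFun_val]
  exact Nat.add_sub_cancel' (ha.ge (by simp))

lemma resPerm_val' (π : Equiv.Perm (Fin N)) (a b : ℕ) (hb : b ≤ N)
    (ha : PCSpl π a) (hbs : PCSpl π b) (i : Fin (b - a)) (x : Fin N)
    (hx : (x : ℕ) = a + (i : ℕ)) :
    a + ((resPerm π a b hb ha hbs i : Fin (b - a)) : ℕ) = (π x : ℕ) := by
  rw [resPerm_val]
  exact perm_val_congr π (by simp [hx])

lemma permContains_resPerm (π : Equiv.Perm (Fin N)) (a b : ℕ) (hb : b ≤ N)
    (ha : PCSpl π a) (hbs : PCSpl π b) :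
    PermContains π (resPerm π a b hb ha hbs) := by
  refine ⟨resEmb a hb, ?_, ?_⟩
  · intro i j hij
    rw [Fin.lt_def] at *
    simp only [resEmb_val]
    omega
  · intro i j
    have h1 := resPerm_val π a b hb ha hbs i
    have h2 := resPerm_val π a b hb ha hbs j
    simp only [Fin.lt_def]
    omega

lemma pcspl_of_res {π : Equiv.Perm (Fin N)} {a b : ℕ} {hb : b ≤ N}
    {ha : PCSpl π a} {hbs : PCSpl π b} {c : ℕ} (hc : a + c ≤ b)
    (h : PCSpl (resPerm π a b hb ha hbs) c) : PCSpl π (a + c) := by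
  intro i hi
  rcases lt_or_ge (i : ℕ) a with h1 | h1
  · have := ha i h1; omega
  · have hj : (i : ℕ) - a < b - a := by have := i.isLt; omega
    have h2 := h ⟨(i : ℕ) - a, hj⟩ (show (i : ℕ) - a < c by omega)
    have h3 := resPerm_val' π a b hb ha hbs ⟨(i : ℕ) - a, hj⟩ i (by simp; omega)
    omega

lemma pcspl_decomp (π : Equiv.Perm (Fin N)) (c : ℕ) (hc : c ≤ N) (h : PCSpl π c) :
    π = permCast (by omega : (c - 0) + (N - c) = N)
        (sumPerm (resPerm π 0 c hc (pcspl_zero π) h)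
                 (resPerm π c N le_rfl h (pcspl_top π N le_rfl))) := by
  apply perm_ext_val
  intro i
  have hi := i.isLt
  have hj1 : (i : ℕ) < (c - 0) + (N - c) := by omega
  rw [permCast_val _ _ i ⟨(i : ℕ), hj1⟩ rfl]
  rcases lt_or_ge (i : ℕ) c with h1 | h1
  · have hj : (i : ℕ) < c - 0 := by omega
    rw [sumPerm_val_left _ _ ⟨(i : ℕ), hj1⟩ ⟨(i : ℕ), hj⟩ rfl]
    have h3 := resPerm_val' π 0 c hc (pcspl_zero π) h ⟨(i : ℕ), hj⟩ i (by simp)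
    omega
  · have hj : (i : ℕ) - (c - 0) < N - c := by omega
    rw [sumPerm_val_right _ _ ⟨(i : ℕ), hj1⟩ ⟨(i : ℕ) - (c - 0), hj⟩
      (show (i : ℕ) = (c - 0) + ((i : ℕ) - (c - 0)) by omega)]
    have h3 := resPerm_val' π c N le_rfl h (pcspl_top π N le_rfl) ⟨(i : ℕ) - (c - 0), hj⟩ i
      (show (i : ℕ) = c + ((i : ℕ) - (c - 0)) by omega)
    omega

lemma rc_resPerm {M : ℕ} (π : Equiv.Perm (Fin M)) (hπ : rcPerm π = π) (s : ℕ)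
    (hs : s ≤ M - s) (h1 : PCSpl π s) (h2 : PCSpl π (M - s)) :
    rcPerm (resPerm π s (M - s) (Nat.sub_le M s) h1 h2)
      = resPerm π s (M - s) (Nat.sub_le M s) h1 h2 := by
  apply perm_ext_val
  intro j
  have hj := j.isLt
  have hrevj : (j.rev : ℕ) = (M - s - s) - 1 - (j : ℕ) := by rw [Fin.val_rev]; omega
  rw [rcPerm_val j j.rev (by omega)]
  have hA := resPerm_val π s (M - s) (Nat.sub_le M s) h1 h2 j.rev
  have hB := resPerm_val π s (M - s) (Nat.sub_le M s) h1 h2 j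
  have hC := rc_fixed_val hπ (resEmb s (Nat.sub_le M s) j) (resEmb s (Nat.sub_le M s) j.rev)
    (by simp only [resEmb_val]; omega)
  have hD : s ≤ (π (resEmb s (Nat.sub_le M s) j) : ℕ) := h1.ge (by simp)
  have hE : (π (resEmb s (Nat.sub_le M s) j) : ℕ) < M - s := h2 _ (by simp; omega)
  have hF : s ≤ (π (resEmb s (Nat.sub_le M s) j.rev) : ℕ) := h1.ge (by simp)
  have hG : (π (resEmb s (Nat.sub_le M s) j.rev) : ℕ) < M - s := h2 _ (by simp; omega)
  omega

/-- The glued permutation `α ⊕ μ ⊕ rc(α)` of size `2n`. -/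
def Fperm (n k : ℕ) (hk : k ≤ n) (α : Equiv.Perm (Fin (n - k)))
    (μ : Equiv.Perm (Fin (2 * k))) : Equiv.Perm (Fin (2 * n)) :=
  permCast (by omega : ((n - k) + 2 * k) + (n - k) = 2 * n) (sumPerm (sumPerm α μ) (rcPerm α))

lemma Fperm_val_low (n k : ℕ) (hk : k ≤ n) (α : Equiv.Perm (Fin (n - k)))
    (μ : Equiv.Perm (Fin (2 * k))) (i : Fin (2 * n)) (j : Fin (n - k))
    (hij : (i : ℕ) = (j : ℕ)) :
    ((Fperm n k hk α μ) i : ℕ) = (α j : ℕ) := by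
  have hj := j.isLt
  have hi1 : (i : ℕ) < ((n - k) + 2 * k) + (n - k) := by omega
  unfold Fperm
  rw [permCast_val _ _ i ⟨(i : ℕ), hi1⟩ rfl]
  rw [sumPerm_val_left _ _ ⟨(i : ℕ), hi1⟩ (Fin.castAdd (2 * k) j) hij]
  rw [sumPerm_val_left _ _ (Fin.castAdd (2 * k) j) j rfl]

lemma Fperm_val_mid (n k : ℕ) (hk : k ≤ n) (α : Equiv.Perm (Fin (n - k)))
    (μ : Equiv.Perm (Fin (2 * k))) (i : Fin (2 * n)) (j : Fin (2 * k))
    (hij : (i : ℕ) = (n - k) + (j : ℕ)) :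
    ((Fperm n k hk α μ) i : ℕ) = (n - k) + (μ j : ℕ) := by
  have hj := j.isLt
  have hi1 : (i : ℕ) < ((n - k) + 2 * k) + (n - k) := by have := i.isLt; omega
  unfold Fperm
  rw [permCast_val _ _ i ⟨(i : ℕ), hi1⟩ rfl]
  rw [sumPerm_val_left _ _ ⟨(i : ℕ), hi1⟩ (Fin.natAdd (n - k) j) hij]
  rw [sumPerm_val_right _ _ (Fin.natAdd (n - k) j) j rfl]

lemma Fperm_val_high (n k : ℕ) (hk : k ≤ n) (α : Equiv.Perm (Fin (n - k)))
    (μ : Equiv.Perm (Fin (2 * k))) (i : Fin (2 * n)) (j : Fin (n - k))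
    (hij : (i : ℕ) + (j : ℕ) = 2 * n - 1) :
    ((Fperm n k hk α μ) i : ℕ) = 2 * n - 1 - (α j : ℕ) := by
  have hj := j.isLt
  have hi := i.isLt
  have hi1 : (i : ℕ) < ((n - k) + 2 * k) + (n - k) := by omega
  unfold Fperm
  rw [permCast_val _ _ i ⟨(i : ℕ), hi1⟩ rfl]
  rw [sumPerm_val_right _ _ ⟨(i : ℕ), hi1⟩ j.rev
    (show (i : ℕ) = ((n - k) + 2 * k) + ((j.rev : Fin (n - k)) : ℕ) by rw [Fin.val_rev]; omega)]
  rw [rcPerm_val j.rev j (by rw [Fin.val_rev]; omega)]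
  have := (α j).isLt
  omega

lemma Fperm_spl (n k : ℕ) (hk : k ≤ n) (α : Equiv.Perm (Fin (n - k)))
    (μ : Equiv.Perm (Fin (2 * k))) : PCSpl (Fperm n k hk α μ) (n - k) := by
  intro i hi
  rw [Fperm_val_low n k hk α μ i ⟨(i : ℕ), hi⟩ rfl]
  exact (α _).isLt

lemma Fperm_rc (n k : ℕ) (hk : k ≤ n) (α : Equiv.Perm (Fin (n - k)))
    (μ : Equiv.Perm (Fin (2 * k))) (hμ : rcPerm μ = μ) :
    rcPerm (Fperm n k hk α μ) = Fperm n k hk α μ := by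
  apply perm_ext_val
  intro i
  have hi := i.isLt
  have hrv : (i.rev : ℕ) = 2 * n - 1 - (i : ℕ) := by rw [Fin.val_rev]; omega
  rcases lt_or_ge (i : ℕ) (n - k) with h1 | h1
  · rw [rcPerm_val i i.rev (by omega)]
    rw [Fperm_val_high n k hk α μ i.rev ⟨(i : ℕ), h1⟩ (by simp only [fin_val_mk]; omega)]
    rw [Fperm_val_low n k hk α μ i ⟨(i : ℕ), h1⟩ rfl]
    have := (α ⟨(i : ℕ), h1⟩).isLt
    omega
  rcases lt_or_ge (i : ℕ) (n + k) with h2 | h2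
  · have hj : (i : ℕ) - (n - k) < 2 * k := by omega
    have hj' : 2 * k - 1 - ((i : ℕ) - (n - k)) < 2 * k := by omega
    rw [rcPerm_val i i.rev (by omega)]
    rw [Fperm_val_mid n k hk α μ i.rev ⟨2 * k - 1 - ((i : ℕ) - (n - k)), hj'⟩
      (by simp only [fin_val_mk]; omega)]
    rw [Fperm_val_mid n k hk α μ i ⟨(i : ℕ) - (n - k), hj⟩ (by simp only [fin_val_mk]; omega)]
    have hμv := rc_fixed_val (N := 2 * k) hμ ⟨(i : ℕ) - (n - k), hj⟩
      ⟨2 * k - 1 - ((i : ℕ) - (n - k)), hj'⟩ (by simp only [fin_val_mk]; omega)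
    have b1 := (μ ⟨(i : ℕ) - (n - k), hj⟩).isLt
    have b2 := (μ ⟨2 * k - 1 - ((i : ℕ) - (n - k)), hj'⟩).isLt
    omega
  · have hj : 2 * n - 1 - (i : ℕ) < n - k := by omega
    have e1 := rcPerm_val (π := Fperm n k hk α μ) i i.rev (by omega)
    have e2 := Fperm_val_low n k hk α μ i.rev ⟨2 * n - 1 - (i : ℕ), hj⟩
      (show (i.rev : ℕ) = 2 * n - 1 - (i : ℕ) by rw [Fin.val_rev]; omega)
    have e3 := Fperm_val_high n k hk α μ i ⟨2 * n - 1 - (i : ℕ), hj⟩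
      (show (i : ℕ) + (2 * n - 1 - (i : ℕ)) = 2 * n - 1 by omega)
    have := (α ⟨2 * n - 1 - (i : ℕ), hj⟩).isLt
    omega

lemma Fperm_nospl (n k : ℕ) (hk : k ≤ n) (α : Equiv.Perm (Fin (n - k)))
    (μ : Equiv.Perm (Fin (2 * k))) (hind : SumIndecomposable μ) {s : ℕ}
    (h1 : n - k < s) (h2 : s ≤ n) : ¬ PCSpl (Fperm n k hk α μ) s := by
  intro hs
  have hk1 : 1 ≤ k := by omega
  have hμs : PCSpl μ (s - (n - k)) := by
    intro j hj
    have hj2 := j.isLt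
    have hlt : (n - k) + (j : ℕ) < 2 * n := by omega
    have hv := Fperm_val_mid n k hk α μ ⟨(n - k) + (j : ℕ), hlt⟩ j rfl
    have hss := hs ⟨(n - k) + (j : ℕ), hlt⟩ (show (n - k) + (j : ℕ) < s by omega)
    omega
  exact hind ⟨s - (n - k), 2 * k - (s - (n - k)),
    resPerm μ 0 (s - (n - k)) (by omega) (pcspl_zero μ) hμs,
    resPerm μ (s - (n - k)) (2 * k) le_rfl hμs (pcspl_top μ (2 * k) le_rfl),
    by omega, by omega, by omega, pcspl_decomp μ (s - (n - k)) (by omega) hμs⟩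

lemma Fperm_mem {C : ∀ n : ℕ, Set (Equiv.Perm (Fin n))} (hsum : SumClosed C)
    (hrc : RCInvariant C) (n k : ℕ) (hk : k ≤ n) (α : Equiv.Perm (Fin (n - k)))
    (μ : Equiv.Perm (Fin (2 * k))) (hα : α ∈ C (n - k)) (hμ : μ ∈ C (2 * k)) :
    Fperm n k hk α μ ∈ C (2 * n) := by
  have hrcα : rcPerm α ∈ C (n - k) := by
    rw [← hrc (n - k)]; exact ⟨α, hα, rfl⟩
  exact permCast_mem _ (hsum _ _ _ _ (hsum _ _ _ _ hα hμ) hrcα)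

/-- Index type for the decomposition. -/
def PCIdx (n : ℕ) :=
  Σ k : Fin (n + 1), Equiv.Perm (Fin (n - (k : ℕ))) × Equiv.Perm (Fin (2 * (k : ℕ)))

def PCF {n : ℕ} (x : PCIdx n) : Equiv.Perm (Fin (2 * n)) :=
  Fperm n (x.1 : ℕ) (Nat.lt_succ_iff.mp x.1.isLt) x.2.1 x.2.2

def PCS (C : ∀ n : ℕ, Set (Equiv.Perm (Fin n))) (n : ℕ) : Set (PCIdx n) :=
  {x | x.2.1 ∈ C (n - (x.1 : ℕ)) ∧ x.2.2 ∈ C (2 * (x.1 : ℕ)) ∧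
    SumIndecomposable x.2.2 ∧ rcPerm x.2.2 = x.2.2}

lemma PCF_k_le (n k k' : ℕ) (hk : k ≤ n) (hk' : k' ≤ n)
    (α : Equiv.Perm (Fin (n - k))) (μ : Equiv.Perm (Fin (2 * k)))
    (α' : Equiv.Perm (Fin (n - k'))) (μ' : Equiv.Perm (Fin (2 * k')))
    (hind' : SumIndecomposable μ')
    (heq : Fperm n k hk α μ = Fperm n k' hk' α' μ') : k' ≤ k := by
  by_contra hlt
  push_neg at hlt
  have h1 : PCSpl (Fperm n k' hk' α' μ') (n - k) := heq ▸ Fperm_spl n k hk α μ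
  exact Fperm_nospl n k' hk' α' μ' hind' (show n - k' < n - k by omega) (by omega) h1

lemma PCF_injOn (C : ∀ n : ℕ, Set (Equiv.Perm (Fin n))) (n : ℕ) :
    Set.InjOn PCF (PCS C n) := by
  rintro ⟨⟨k, hk⟩, α, μ⟩ hx ⟨⟨k', hk'⟩, α', μ'⟩ hy heq
  obtain ⟨-, -, hindx, -⟩ := hx
  obtain ⟨-, -, hindy, -⟩ := hy
  have hkn : k ≤ n := by omega
  have hkn' : k' ≤ n := by omega
  have heq' : Fperm n k hkn α μ = Fperm n k' hkn' α' μ' := heq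
  have hkk : k = k' := le_antisymm
    (PCF_k_le n k' k hkn' hkn α' μ' α μ hindx heq'.symm)
    (PCF_k_le n k k' hkn hkn' α μ α' μ' hindy heq')
  subst hkk
  have hv1 : ((⟨k, hk⟩ : Fin (n + 1)) : ℕ) = k := rfl
  have hv2 : ((⟨k, hk'⟩ : Fin (n + 1)) : ℕ) = k := rfl
  have hα : α = α' := by
    apply perm_ext_val; intro j
    have hj := j.isLt
    have hlt : (j : ℕ) < 2 * n := by omega
    have e1 := Fperm_val_low n k hkn α μ ⟨(j : ℕ), hlt⟩ j rfl
    have e2 := Fperm_val_low n k hkn' α' μ' ⟨(j : ℕ), hlt⟩ j rfl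
    rw [heq'] at e1
    omega
  have hμeq : μ = μ' := by
    apply perm_ext_val; intro j
    have hj := j.isLt
    have hlt : (n - k) + (j : ℕ) < 2 * n := by omega
    have e1 := Fperm_val_mid n k hkn α μ ⟨(n - k) + (j : ℕ), hlt⟩ j rfl
    have e2 := Fperm_val_mid n k hkn' α' μ' ⟨(n - k) + (j : ℕ), hlt⟩ j rfl
    rw [heq'] at e1
    omega
  subst hα
  subst hμeq
  rfl

lemma PCF_mapsTo (C : ∀ n : ℕ, Set (Equiv.Perm (Fin n))) (hsum : SumClosed C)
    (hrc : RCInvariant C) (n : ℕ) :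
    Set.MapsTo PCF (PCS C n) {π : Equiv.Perm (Fin (2 * n)) | π ∈ C (2 * n) ∧ rcPerm π = π} := by
  rintro ⟨⟨k, hk⟩, α, μ⟩ hx
  obtain ⟨h1, h2, h3, h4⟩ := hx
  have hkn : k ≤ n := by omega
  constructor
  · exact Fperm_mem hsum hrc n k hkn α μ h1 h2
  · exact Fperm_rc n k hkn α μ h4

lemma PCF_surjOn (C : ∀ n : ℕ, Set (Equiv.Perm (Fin n))) (hC : IsPermClass C) (n : ℕ) :
    Set.SurjOn PCF (PCS C n)
      {π : Equiv.Perm (Fin (2 * n)) | π ∈ C (2 * n) ∧ rcPerm π = π} := by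
  intro π hπ
  obtain ⟨hπC, hπrc⟩ := hπ
  classical
  have han : Nat.findGreatest (fun s => PCSpl π s) n ≤ n := Nat.findGreatest_le n
  set a := Nat.findGreatest (fun s => PCSpl π s) n with hadef
  have haP : PCSpl π a := Nat.findGreatest_spec (Nat.zero_le n) (pcspl_zero π)
  have hmax : ∀ s, a < s → s ≤ n → ¬ PCSpl π s := by
    intro s hs1 hs2
    exact Nat.findGreatest_is_greatest hs1 hs2
  have h2a : PCSpl π (2 * n - a) := pcspl_rc hπrc haP
  set k := n - a with hkdef
  have hk : k ≤ n := by omega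
  have hkn1 : k < n + 1 := by omega
  have hsz1 : a - 0 = n - k := by omega
  have hsz2 : 2 * n - a - a = 2 * k := by omega
  have hb0 : a ≤ 2 * n := by omega
  -- membership facts
  have hmemα : permCast hsz1 (resPerm π 0 a hb0 (pcspl_zero π) haP) ∈ C (n - k) :=
    permCast_mem hsz1 (hC _ _ _ π hπC (permContains_resPerm π 0 a hb0 (pcspl_zero π) haP))
  have hmemμ : permCast hsz2 (resPerm π a (2 * n - a) (Nat.sub_le (2 * n) a) haP h2a)
      ∈ C (2 * k) :=
    permCast_mem hsz2 (hC _ _ _ π hπC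
      (permContains_resPerm π a (2 * n - a) (Nat.sub_le (2 * n) a) haP h2a))
  have hindμ : SumIndecomposable
      (permCast hsz2 (resPerm π a (2 * n - a) (Nat.sub_le (2 * n) a) haP h2a)) := by
    rw [sumIndecomposable_permCast_iff]
    rintro ⟨c, d, σ, τ, hcd, hc0, hd0, hdec⟩
    have hsplc : PCSpl (resPerm π a (2 * n - a) (Nat.sub_le (2 * n) a) haP h2a) c := by
      rw [hdec]
      exact (pcspl_permCast hcd _ c).mpr (pcspl_sum σ τ)
    have hbound : a + c ≤ 2 * n - a := by omega
    have hπac : PCSpl π (a + c) := pcspl_of_res hbound hsplc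
    rcases le_or_gt (a + c) n with hle | hgt
    · exact hmax (a + c) (by omega) hle hπac
    · have h3 := pcspl_rc hπrc hπac
      exact hmax (2 * n - (a + c)) (by omega) (by omega) h3
  have hrcμ : rcPerm (permCast hsz2 (resPerm π a (2 * n - a) (Nat.sub_le (2 * n) a) haP h2a))
      = permCast hsz2 (resPerm π a (2 * n - a) (Nat.sub_le (2 * n) a) haP h2a) := by
    rw [rcPerm_permCast, rc_resPerm π hπrc a (by omega) haP h2a]
  -- the equation
  have hFeq : Fperm n k hk (permCast hsz1 (resPerm π 0 a hb0 (pcspl_zero π) haP))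
      (permCast hsz2 (resPerm π a (2 * n - a) (Nat.sub_le (2 * n) a) haP h2a)) = π := by
    apply perm_ext_val
    intro i
    have hi := i.isLt
    rcases lt_or_ge (i : ℕ) (n - k) with h1 | h1
    · have hj2 : (i : ℕ) < a - 0 := by omega
      rw [Fperm_val_low n k hk _ _ i ⟨(i : ℕ), h1⟩ rfl]
      rw [permCast_val hsz1 _ ⟨(i : ℕ), h1⟩ ⟨(i : ℕ), hj2⟩ rfl]
      have hv := resPerm_val' π 0 a hb0 (pcspl_zero π) haP ⟨(i : ℕ), hj2⟩ i (by simp)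
      omega
    rcases lt_or_ge (i : ℕ) (n + k) with h2 | h2
    · have hj1 : (i : ℕ) - (n - k) < 2 * k := by omega
      have hj2 : (i : ℕ) - (n - k) < 2 * n - a - a := by omega
      rw [Fperm_val_mid n k hk _ _ i ⟨(i : ℕ) - (n - k), hj1⟩ (by simp only [fin_val_mk]; omega)]
      rw [permCast_val hsz2 _ ⟨(i : ℕ) - (n - k), hj1⟩ ⟨(i : ℕ) - (n - k), hj2⟩ rfl]
      have hv := resPerm_val' π a (2 * n - a) (Nat.sub_le (2 * n) a) haP h2a
        ⟨(i : ℕ) - (n - k), hj2⟩ i (by simp only [fin_val_mk]; omega)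
      omega
    · have hj1 : 2 * n - 1 - (i : ℕ) < n - k := by omega
      have hj2 : 2 * n - 1 - (i : ℕ) < a - 0 := by omega
      rw [Fperm_val_high n k hk _ _ i ⟨2 * n - 1 - (i : ℕ), hj1⟩ (by simp only [fin_val_mk]; omega)]
      rw [permCast_val hsz1 _ ⟨2 * n - 1 - (i : ℕ), hj1⟩ ⟨2 * n - 1 - (i : ℕ), hj2⟩ rfl]
      have hv := resPerm_val' π 0 a hb0 (pcspl_zero π) haP ⟨2 * n - 1 - (i : ℕ), hj2⟩
        ⟨2 * n - 1 - (i : ℕ), by omega⟩ (by simp only [fin_val_mk]; omega)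
      have hrev : ((Fin.rev i : Fin (2 * n)) : ℕ) = 2 * n - 1 - (i : ℕ) := by
        rw [Fin.val_rev]; omega
      have hpi := rc_fixed_val hπrc i (⟨2 * n - 1 - (i : ℕ), by omega⟩ : Fin (2 * n))
        (by simp only [fin_val_mk]; omega)
      omega
  refine ⟨⟨⟨k, hkn1⟩, (permCast hsz1 (resPerm π 0 a hb0 (pcspl_zero π) haP),
    permCast hsz2 (resPerm π a (2 * n - a) (Nat.sub_le (2 * n) a) haP h2a))⟩,
    ⟨hmemα, hmemμ, hindμ, hrcμ⟩, hFeq⟩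

lemma mycard_sigma {m : ℕ} (γ : Fin m → Type*) [∀ i, Finite (γ i)] :
    Nat.card ((i : Fin m) × γ i) = ∑ i : Fin m, Nat.card (γ i) := by
  letI : ∀ i, Fintype (γ i) := fun i => Fintype.ofFinite _
  rw [Nat.card_eq_fintype_card, Fintype.card_sigma]
  exact Finset.sum_congr rfl fun i _ => (Nat.card_eq_fintype_card).symm

end PCAux


theorem stmt13 (C : ∀ n : ℕ, Set (Equiv.Perm (Fin n))) (hC : IsPermClass C)
    (hsum : SumClosed C) (hrc : RCInvariant C) (n : ℕ) :
    rcCount C n = classCount C n +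
      ∑ k ∈ Finset.Icc 1 n, classCount C (n - k) * indRcCount C k := by
  classical
  have hbij : Set.BijOn PCF (PCS C n)
      {π : Equiv.Perm (Fin (2 * n)) | π ∈ C (2 * n) ∧ rcPerm π = π} :=
    ⟨PCF_mapsTo C hsum hrc n, PCF_injOn C n, PCF_surjOn C hC n⟩
  have h1 : rcCount C n = (PCS C n).ncard := by
    rw [rcCount, ← hbij.image_eq, Set.ncard_image_of_injOn hbij.injOn]
  have e : ↥(PCS C n) ≃ Σ k : Fin (n + 1), (↥(C (n - (k : ℕ))) ×
      ↥{μ : Equiv.Perm (Fin (2 * (k : ℕ))) |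
        μ ∈ C (2 * (k : ℕ)) ∧ SumIndecomposable μ ∧ rcPerm μ = μ}) :=
    ⟨fun x => ⟨x.1.1, (⟨x.1.2.1, x.2.1⟩, ⟨x.1.2.2, x.2.2⟩)⟩,
     fun y => ⟨⟨y.1, (y.2.1.1, y.2.2.1)⟩, ⟨y.2.1.2, y.2.2.2⟩⟩,
     fun x => rfl, fun y => rfl⟩
  have h2 : (PCS C n).ncard
      = ∑ k : Fin (n + 1), classCount C (n - (k : ℕ)) * indRcCount C (k : ℕ) := by
    rw [← Nat.card_coe_set_eq, Nat.card_congr e, mycard_sigma]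
    refine Finset.sum_congr rfl fun k _ => ?_
    rw [Nat.card_prod, Nat.card_coe_set_eq, Nat.card_coe_set_eq]
    rfl
  have h4 : classCount C n * indRcCount C 0 = classCount C n := by
    have hset : {π : Equiv.Perm (Fin (2 * 0)) |
        π ∈ C (2 * 0) ∧ SumIndecomposable π ∧ rcPerm π = π}
        = {π : Equiv.Perm (Fin 0) | π ∈ C 0} := by
      ext π
      simp only [Set.mem_setOf_eq]
      constructor
      · exact fun h => h.1
      · intro h
        refine ⟨h, ?_, ?_⟩
        · rintro ⟨a, b, σ, τ, hab, ha, hb, -⟩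
          omega
        · exact Equiv.ext fun i => absurd i.isLt (by omega)
    have hind0 : indRcCount C 0 = (C 0).ncard := by
      rw [indRcCount, hset, Set.setOf_mem_eq]
    rcases Set.eq_empty_or_nonempty (C n) with hCn | ⟨ρ, hρ⟩
    · rw [classCount, hCn]
      simp
    · have h0 : Equiv.refl (Fin 0) ∈ C 0 :=
        hC 0 n (Equiv.refl (Fin 0)) ρ hρ
          ⟨fun i => i.elim0, fun i _ _ => i.elim0, fun i => i.elim0⟩
      have hC0 : C 0 = {Equiv.refl (Fin 0)} :=
        Set.eq_singleton_iff_unique_mem.mpr ⟨h0, fun x _ => Equiv.ext fun i => i.elim0⟩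
      rw [hind0, hC0, Set.ncard_singleton, mul_one]
  have hIcc : ∑ i ∈ Finset.range n, classCount C (n - (i + 1)) * indRcCount C (i + 1)
      = ∑ k ∈ Finset.Icc 1 n, classCount C (n - k) * indRcCount C k := by
    rw [show Finset.Icc 1 n = Finset.image (fun i => i + 1) (Finset.range n) by
      ext x
      simp only [Finset.mem_Icc, Finset.mem_image, Finset.mem_range]
      constructor
      · intro hx
        exact ⟨x - 1, by omega, by omega⟩
      · rintro ⟨a, ha, rfl⟩
        omega]
    rw [Finset.sum_image (fun a _ b _ h => by omega)]
  rw [h1, h2]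
  rw [Fin.sum_univ_eq_sum_range (fun k => classCount C (n - k) * indRcCount C k) (n + 1)]
  rw [Finset.sum_range_succ' (fun k => classCount C (n - k) * indRcCount C k) n]
  rw [hIcc]
  have hn0 : n - 0 = n := Nat.sub_zero n
  rw [hn0, h4]
  omega
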